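/- Let (X, d) be a compact metric space, f : X → X continuous, and let Ψ = (ψ_n)_{n≥1} be a super-additive sequence with respect to f of continuous functions ψ_n : X → ℝ. Then for every n ≥ 1, P_f(ψ_1) ≤ P_f((1/n)·ψ_n). -/

import Mathlib

noncomputable section

/-- A finite set `F ⊆ X` is `(n, ε)`-separated for `f` if any two distinct points of `F`
are at distance `> ε` at some time `0 ≤ k < n` of their orbits. -/
def IsSeparatedSet {X : Type*} [MetricSpace X] (f : X → X) (n : ℕ) (ε : ℝ)
    (F : Finset X) : Prop :=
  ∀ x ∈ F, ∀ y ∈ F, x ≠ y → ∃ k < n, ε < dist (f^[k] x) (f^[k] y)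

/-- `limsup_{n→∞} (1/n) log sup { Σ_{x∈F} exp(S_n φ(x)) : F (n,ε)-separated }`. -/
def presApprox {X : Type*} [MetricSpace X] (f : X → X) (φ : X → ℝ) (ε : ℝ) : EReal :=
  Filter.limsup (fun n : ℕ =>
    (((n : ℝ)⁻¹ * Real.log (sSup {s : ℝ | ∃ F : Finset X, IsSeparatedSet f n ε F ∧
      s = ∑ x ∈ F, Real.exp (∑ k ∈ Finset.range n, φ (f^[k] x))}) : ℝ) : EReal))
    Filter.atTop

/-- The topological pressure `P_f(φ)`, the limit as `ε → 0` (equivalently, by monotonicity,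
the supremum over `ε > 0`) of `presApprox f φ ε`. -/
def topPressure {X : Type*} [MetricSpace X] (f : X → X) (φ : X → ℝ) : EReal :=
  ⨆ (ε : ℝ) (_ : 0 < ε), presApprox f φ ε

open Filter Finset Metric Real in
/-- The set of values `Σ_{x∈F} exp(S_m φ(x))` over `(m,ε)`-separated sets is bounded above. -/
private lemma sepSet_bddAbove {X : Type*} [MetricSpace X] [CompactSpace X]
    (f : X → X) (φ : X → ℝ) (m : ℕ) {ε : ℝ} (hε : 0 < ε)
    (Mφ : ℝ) (hMφ : ∀ x : X, |φ x| ≤ Mφ) :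
    BddAbove {s : ℝ | ∃ F : Finset X, IsSeparatedSet f m ε F ∧
      s = ∑ x ∈ F, Real.exp (∑ k ∈ Finset.range m, φ (f^[k] x))} := by
  classical
  obtain ⟨t, htfin, htcov⟩ :=
    (totallyBounded_iff.mp (isCompact_univ (X := X)).totallyBounded) (ε/2) (by positivity)
  have hc : ∀ x : X, ∃ y, y ∈ t ∧ x ∈ ball y (ε/2) := by
    intro x
    have hx := htcov (Set.mem_univ x)
    simpa using hx
  choose c hct hcb using hc
  set T : Finset (Fin m → X) := Fintype.piFinset (fun _ => htfin.toFinset) with hT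
  refine ⟨(T.card : ℝ) * Real.exp (m * Mφ), ?_⟩
  rintro s ⟨F, hF, rfl⟩
  have hinj : Set.InjOn (fun x (i : Fin m) => c (f^[(i : ℕ)] x)) F := by
    intro x hx y hy hxy
    by_contra hne
    obtain ⟨k, hk, hdist⟩ := hF x hx y hy hne
    have hck : c (f^[k] x) = c (f^[k] y) := congrFun hxy ⟨k, hk⟩
    have h1 : dist (f^[k] x) (c (f^[k] x)) < ε/2 := mem_ball.mp (hcb (f^[k] x))
    have h2 : dist (f^[k] y) (c (f^[k] x)) < ε/2 := by
      rw [hck]; exact mem_ball.mp (hcb (f^[k] y))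
    have : dist (f^[k] x) (f^[k] y) < ε := by
      calc dist (f^[k] x) (f^[k] y)
          ≤ dist (f^[k] x) (c (f^[k] x)) + dist (f^[k] y) (c (f^[k] x)) :=
            dist_triangle_right _ _ _
        _ < ε/2 + ε/2 := add_lt_add h1 h2
        _ = ε := add_halves ε
    exact absurd hdist (not_lt.mpr this.le)
  have hcard : F.card ≤ T.card := by
    refine Finset.card_le_card_of_injOn _ (fun x _ => ?_) hinj
    exact Fintype.mem_piFinset.mpr fun i => (Set.Finite.mem_toFinset htfin).mpr (hct _)
  calc ∑ x ∈ F, Real.exp (∑ k ∈ Finset.range m, φ (f^[k] x))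
      ≤ ∑ _x ∈ F, Real.exp (m * Mφ) := by
        refine Finset.sum_le_sum fun x _ => Real.exp_le_exp.mpr ?_
        calc ∑ k ∈ Finset.range m, φ (f^[k] x) ≤ ∑ _k ∈ Finset.range m, Mφ :=
              Finset.sum_le_sum fun k _ => (abs_le.mp (hMφ _)).2
          _ = m * Mφ := by simp [Finset.sum_const, mul_comm]
    _ = (F.card : ℝ) * Real.exp (m * Mφ) := by simp [Finset.sum_const, mul_comm]
    _ ≤ (T.card : ℝ) * Real.exp (m * Mφ) := by
        have := Real.exp_pos (m * Mφ)
        gcongr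

open Filter in
private lemma limsup_aux (A B : ℕ → ℝ) (C : ℝ) (hpos : ∀ m, 0 < A m)
    (hle : ∀ m, A m ≤ Real.exp C * B m) :
    Filter.limsup (fun m : ℕ => ((((m : ℝ)⁻¹ * Real.log (A m)) : ℝ) : EReal)) Filter.atTop ≤
    Filter.limsup (fun m : ℕ => ((((m : ℝ)⁻¹ * Real.log (B m)) : ℝ) : EReal)) Filter.atTop := by
  have hb : ∀ m, 0 < B m := by
    intro m
    nlinarith [Real.exp_pos C, hpos m, hle m]
  have main : ∀ m : ℕ, ((((m : ℝ)⁻¹ * Real.log (A m)) : ℝ) : EReal) ≤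
      ((((m : ℝ)⁻¹ * Real.log (B m) + C * (m : ℝ)⁻¹) : ℝ) : EReal) := by
    intro m
    rw [EReal.coe_le_coe_iff]
    have h1 : Real.log (A m) ≤ C + Real.log (B m) := by
      have h := Real.log_le_log (hpos m) (hle m)
      rwa [Real.log_mul (Real.exp_ne_zero C) (hb m).ne', Real.log_exp] at h
    have h2 : (0 : ℝ) ≤ (m : ℝ)⁻¹ := by positivity
    nlinarith [mul_le_mul_of_nonneg_left h1 h2]
  refine le_trans (Filter.limsup_le_limsup (Filter.Eventually.of_forall main)) ?_
  have hcoe : (fun m : ℕ => ((((m : ℝ)⁻¹ * Real.log (B m) + C * (m : ℝ)⁻¹) : ℝ) : EReal)) =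
      (fun m : ℕ => ((((m : ℝ)⁻¹ * Real.log (B m)) : ℝ) : EReal)) +
      (fun m : ℕ => (((C * (m : ℝ)⁻¹) : ℝ) : EReal)) := by
    funext m
    simp [EReal.coe_add]
  rw [hcoe]
  have hc : Filter.Tendsto (fun m : ℕ => (((C * (m : ℝ)⁻¹) : ℝ) : EReal)) Filter.atTop
      (nhds (0 : EReal)) := by
    have : Filter.Tendsto (fun m : ℕ => C * (m : ℝ)⁻¹) Filter.atTop (nhds 0) := by
      simpa using tendsto_inv_atTop_nhds_zero_nat.const_mul C
    rw [show ((0 : EReal)) = (((0 : ℝ) : EReal)) by simp]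
    exact EReal.tendsto_coe.mpr this
  have hlim : Filter.limsup (fun m : ℕ => (((C * (m : ℝ)⁻¹) : ℝ) : EReal)) Filter.atTop = 0 :=
    hc.limsup_eq
  refine le_trans (EReal.limsup_add_le ?_ ?_) ?_
  · exact Or.inr (by rw [hlim]; simp)
  · exact Or.inr (by rw [hlim]; simp)
  · rw [hlim, add_zero]

/-- For a continuous map `f` of a compact metric space and a super-additive sequence
`(ψ_n)_{n≥1}` of continuous functions, `P_f(ψ_1) ≤ P_f((1/n)·ψ_n)` for every `n ≥ 1`. -/
theorem pressure_le_pressure_div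
    {X : Type*} [MetricSpace X] [CompactSpace X]
    (f : X → X) (hf : Continuous f)
    (ψ : ℕ → X → ℝ) (hcont : ∀ n, 1 ≤ n → Continuous (ψ n))
    (hsa : ∀ n, 1 ≤ n → ∀ m, 1 ≤ m → ∀ x : X,
      ψ n x + ψ m (f^[n] x) ≤ ψ (n + m) x)
    (n : ℕ) (hn : 1 ≤ n) :
    topPressure f (ψ 1) ≤ topPressure f (fun x => (n : ℝ)⁻¹ * ψ n x) := by
  classical
  set φ : X → ℝ := fun x => (n : ℝ)⁻¹ * ψ n x with hφdef
  by_cases hX : IsEmpty X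
  · have hset : ∀ (g : X → ℝ) (m : ℕ) (ε : ℝ),
        {s : ℝ | ∃ F : Finset X, IsSeparatedSet f m ε F ∧
          s = ∑ x ∈ F, Real.exp (∑ k ∈ Finset.range m, g (f^[k] x))} = {0} := by
      intro g m ε
      ext s
      simp only [Set.mem_setOf_eq, Set.mem_singleton_iff]
      constructor
      · rintro ⟨F, -, rfl⟩
        rw [Finset.eq_empty_of_isEmpty F]
        simp
      · rintro rfl
        exact ⟨∅, fun x hx => absurd hx (Finset.notMem_empty x), by simp⟩
    have heq : topPressure f (ψ 1) = topPressure f φ := by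
      unfold topPressure presApprox
      simp only [hset]
    exact le_of_eq heq
  have hXne : Nonempty X := not_isEmpty_iff.mp hX
  obtain ⟨x₀⟩ := hXne
  -- bounds on ψ 1 and φ
  obtain ⟨M₁, hM₁⟩ : ∃ M, ∀ x : X, |ψ 1 x| ≤ M := by
    obtain ⟨C, hC⟩ := (isCompact_univ (X := X)).exists_bound_of_continuousOn
      (hcont 1 le_rfl).continuousOn
    exact ⟨C, fun x => by simpa [Real.norm_eq_abs] using hC x (Set.mem_univ x)⟩
  obtain ⟨Mφ, hMφ⟩ : ∃ M, ∀ x : X, |φ x| ≤ M := by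
    obtain ⟨C, hC⟩ := (isCompact_univ (X := X)).exists_bound_of_continuousOn
      (continuous_const.mul (hcont n hn)).continuousOn
    refine ⟨C, fun x => ?_⟩
    have h := hC x (Set.mem_univ x)
    rw [Real.norm_eq_abs] at h
    exact h
  have hM₁0 : 0 ≤ M₁ := le_trans (abs_nonneg _) (hM₁ x₀)
  have hn0 : (0 : ℝ) < n := by exact_mod_cast hn
  -- superadditivity gives Birkhoff-sum bound
  have hS1 : ∀ (p : ℕ), 1 ≤ p → ∀ y : X,
      ∑ k ∈ Finset.range p, ψ 1 (f^[k] y) ≤ ψ p y := by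
    intro p hp
    induction p, hp using Nat.le_induction with
    | base => intro y; simp
    | succ p hp ih =>
      intro y
      rw [Finset.sum_range_succ]
      calc (∑ k ∈ Finset.range p, ψ 1 (f^[k] y)) + ψ 1 (f^[p] y)
          ≤ ψ p y + ψ 1 (f^[p] y) := add_le_add_left (ih y) _
        _ ≤ ψ (p + 1) y := hsa p hp 1 le_rfl y
  -- key pointwise comparison of Birkhoff sums
  have key : ∀ (m : ℕ) (x : X),
      ∑ k ∈ Finset.range m, ψ 1 (f^[k] x) ≤
        2 * n * M₁ + ∑ k ∈ Finset.range m, φ (f^[k] x) := by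
    intro m x
    set S : ℝ := ∑ k ∈ Finset.range m, ψ 1 (f^[k] x) with hS
    have hshift : ∀ k : ℕ, k ≤ n →
        S - 2 * k * M₁ ≤ ∑ j ∈ Finset.range m, ψ 1 (f^[k + j] x) := by
      intro k hk
      have e1 : ∑ i ∈ Finset.range (k + m), ψ 1 (f^[i] x) =
          (∑ i ∈ Finset.range k, ψ 1 (f^[i] x)) +
          ∑ j ∈ Finset.range m, ψ 1 (f^[k + j] x) := Finset.sum_range_add _ k m
      have e2 : ∑ i ∈ Finset.range (m + k), ψ 1 (f^[i] x) =
          S + ∑ j ∈ Finset.range k, ψ 1 (f^[m + j] x) := Finset.sum_range_add _ m k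
      have e3 : k + m = m + k := Nat.add_comm k m
      have b1 : ∑ i ∈ Finset.range k, ψ 1 (f^[i] x) ≤ k * M₁ := by
        calc ∑ i ∈ Finset.range k, ψ 1 (f^[i] x) ≤ ∑ _i ∈ Finset.range k, M₁ :=
              Finset.sum_le_sum fun i _ => (abs_le.mp (hM₁ _)).2
          _ = k * M₁ := by simp [Finset.sum_const, mul_comm]
      have b2 : -(k * M₁) ≤ ∑ j ∈ Finset.range k, ψ 1 (f^[m + j] x) := by
        calc (-(k * M₁) : ℝ) = ∑ _j ∈ Finset.range k, (-M₁) := by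
              simp [Finset.sum_const, mul_comm]
          _ ≤ ∑ j ∈ Finset.range k, ψ 1 (f^[m + j] x) :=
              Finset.sum_le_sum fun j _ => neg_le_of_neg_le (by
                have := (abs_le.mp (hM₁ (f^[m + j] x))).1
                linarith)
      have hkM : (k : ℝ) * M₁ ≤ (n : ℝ) * M₁ := by
        have : (k : ℝ) ≤ (n : ℝ) := by exact_mod_cast hk
        nlinarith
      rw [e3] at e1
      rw [e2] at e1
      nlinarith [e1, b1, b2, hkM]
    have hdouble : (n : ℝ) * (S - 2 * n * M₁) ≤ ∑ j ∈ Finset.range m, ψ n (f^[j] x) := by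
      have h1 : ∑ j ∈ Finset.range m, ∑ k ∈ Finset.range n, ψ 1 (f^[k + j] x) ≤
          ∑ j ∈ Finset.range m, ψ n (f^[j] x) := by
        refine Finset.sum_le_sum fun j _ => ?_
        have := hS1 n hn (f^[j] x)
        calc ∑ k ∈ Finset.range n, ψ 1 (f^[k + j] x)
            = ∑ k ∈ Finset.range n, ψ 1 (f^[k] (f^[j] x)) := by
              refine Finset.sum_congr rfl fun k _ => ?_
              rw [Function.iterate_add_apply]
          _ ≤ ψ n (f^[j] x) := this
      have h2 : ∑ k ∈ Finset.range n, (S - 2 * (n : ℝ) * M₁) ≤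
          ∑ j ∈ Finset.range m, ∑ k ∈ Finset.range n, ψ 1 (f^[k + j] x) := by
        rw [Finset.sum_comm]
        refine Finset.sum_le_sum fun k hk => ?_
        have hkn : k ≤ n := le_of_lt (Finset.mem_range.mp hk)
        have := hshift k hkn
        have hkM : 2 * (k : ℝ) * M₁ ≤ 2 * (n : ℝ) * M₁ := by
          have : (k : ℝ) ≤ (n : ℝ) := by exact_mod_cast hkn
          nlinarith
        linarith
      have h3 : ∑ k ∈ Finset.range n, (S - 2 * (n : ℝ) * M₁) =
          (n : ℝ) * (S - 2 * n * M₁) := by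
        simp [Finset.sum_const, mul_comm]; ring
      linarith [h1, h2, h3.symm.le]
    have hφsum : ∑ k ∈ Finset.range m, φ (f^[k] x) =
        (n : ℝ)⁻¹ * ∑ k ∈ Finset.range m, ψ n (f^[k] x) := by
      rw [Finset.mul_sum]
    rw [hφsum]
    have h4 := mul_le_mul_of_nonneg_left hdouble (inv_nonneg.mpr hn0.le)
    rw [← mul_assoc, inv_mul_cancel₀ hn0.ne', one_mul] at h4
    linarith
  -- per-ε comparison of approximate pressures
  have hpres : ∀ ε : ℝ, 0 < ε → presApprox f (ψ 1) ε ≤ presApprox f φ ε := by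
    intro ε hε
    have bdd1 : ∀ m : ℕ, BddAbove {s : ℝ | ∃ F : Finset X, IsSeparatedSet f m ε F ∧
        s = ∑ x ∈ F, Real.exp (∑ k ∈ Finset.range m, ψ 1 (f^[k] x))} :=
      fun m => sepSet_bddAbove f (ψ 1) m hε M₁ hM₁
    have bdd2 : ∀ m : ℕ, BddAbove {s : ℝ | ∃ F : Finset X, IsSeparatedSet f m ε F ∧
        s = ∑ x ∈ F, Real.exp (∑ k ∈ Finset.range m, φ (f^[k] x))} :=
      fun m => sepSet_bddAbove f φ m hε Mφ hMφ
    have hsingsep : ∀ m : ℕ, IsSeparatedSet f m ε ({x₀} : Finset X) := by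
      intro m x hx y hy hxy
      rw [Finset.mem_singleton] at hx hy
      exact absurd (hx.trans hy.symm) hxy
    have hpos1 : ∀ m : ℕ, 0 < sSup {s : ℝ | ∃ F : Finset X, IsSeparatedSet f m ε F ∧
        s = ∑ x ∈ F, Real.exp (∑ k ∈ Finset.range m, ψ 1 (f^[k] x))} := by
      intro m
      refine lt_of_lt_of_le (Real.exp_pos (∑ k ∈ Finset.range m, ψ 1 (f^[k] x₀))) ?_
      exact le_csSup (bdd1 m) ⟨{x₀}, hsingsep m, by simp⟩
    have hAB : ∀ m : ℕ, sSup {s : ℝ | ∃ F : Finset X, IsSeparatedSet f m ε F ∧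
        s = ∑ x ∈ F, Real.exp (∑ k ∈ Finset.range m, ψ 1 (f^[k] x))} ≤
        Real.exp (2 * n * M₁) * sSup {s : ℝ | ∃ F : Finset X, IsSeparatedSet f m ε F ∧
        s = ∑ x ∈ F, Real.exp (∑ k ∈ Finset.range m, φ (f^[k] x))} := by
      intro m
      refine csSup_le ⟨0, ∅, fun x hx => absurd hx (Finset.notMem_empty x), by simp⟩ ?_
      rintro s ⟨F, hF, rfl⟩
      calc ∑ x ∈ F, Real.exp (∑ k ∈ Finset.range m, ψ 1 (f^[k] x))
          ≤ ∑ x ∈ F, Real.exp (2 * n * M₁ + ∑ k ∈ Finset.range m, φ (f^[k] x)) :=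
            Finset.sum_le_sum fun x _ => Real.exp_le_exp.mpr (key m x)
        _ = Real.exp (2 * n * M₁) *
            ∑ x ∈ F, Real.exp (∑ k ∈ Finset.range m, φ (f^[k] x)) := by
            rw [Finset.mul_sum]
            exact Finset.sum_congr rfl fun x _ => Real.exp_add _ _
        _ ≤ Real.exp (2 * n * M₁) * sSup {s : ℝ | ∃ F : Finset X, IsSeparatedSet f m ε F ∧
            s = ∑ x ∈ F, Real.exp (∑ k ∈ Finset.range m, φ (f^[k] x))} := by
            have := Real.exp_pos (2 * n * M₁)
            gcongr
            exact le_csSup (bdd2 m) ⟨F, hF, rfl⟩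
    exact limsup_aux _ _ (2 * n * M₁) hpos1 hAB
  unfold topPressure
  exact iSup₂_le fun ε hε => le_trans (hpres ε hε)
    (le_iSup₂ (f := fun (ε : ℝ) (_ : 0 < ε) => presApprox f φ ε) ε hε)
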